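/- Let α > 0 and λ, θ̄, σ̄ ∈ ℝ, and define G(r,t) := A₂(t) on ℝ × [0,T] (constant in r). Then G is C^{2,1}, G(r,T) = -1, G(r,t) < 0, and G solves the PDE G_t + (1/2)·σ̄²·G_rr + (λ + σ̄·B₁(t))²·G + (θ̄ - α·r - 2·σ̄·λ - 2·σ̄²·B₁(t))·G_r = 0 for all (r,t) ∈ ℝ × [0,T]. -/

import Mathlib

/- STATEMENT 16: In the Vasicek model, G(r,t) := A₂(t) (constant in r) is C^{2,1},
satisfies G(r,T) = -1, G < 0, and solves the PDE
G_t + ½σ̄²G_rr + (λ + σ̄B₁(t))²G + (θ̄ - αr - 2σ̄λ - 2σ̄²B₁(t))G_r = 0 on ℝ × [0,T]. -/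
theorem stmt_16
    (T : ℝ) (hT : 0 < T)
    (α lam θ σb : ℝ) (hα : 0 < α)
    (B1 A2 : ℝ → ℝ)
    (hB1 : ∀ t : ℝ, B1 t = (1 / α) * (1 - Real.exp (-(α * (T - t)))))
    (hA2 : ∀ t : ℝ, A2 t = -Real.exp (∫ s in t..T, (lam + σb * B1 s) ^ 2))
    (G : ℝ → ℝ → ℝ)
    (hG : ∀ r t : ℝ, G r t = A2 t) :
    (∀ t : ℝ, ContDiff ℝ 2 fun p => G p t) ∧
    (∀ r : ℝ, Differentiable ℝ fun s => G r s) ∧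
    (∀ r : ℝ, G r T = -1) ∧
    (∀ r : ℝ, ∀ t ∈ Set.Icc (0 : ℝ) T, G r t < 0) ∧
    (∀ r : ℝ, ∀ t ∈ Set.Icc (0 : ℝ) T,
      deriv (fun s => G r s) t
        + (1 / 2) * σb ^ 2 * deriv (fun p => deriv (fun q => G q t) p) r
        + (lam + σb * B1 t) ^ 2 * G r t
        + (θ - α * r - 2 * σb * lam - 2 * σb ^ 2 * B1 t) * deriv (fun p => G p t) r
        = 0) := by
  set f : ℝ → ℝ := fun s => (lam + σb * B1 s) ^ 2 with hf
  have hB1c : Continuous B1 := by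
    have : B1 = fun t => (1 / α) * (1 - Real.exp (-(α * (T - t)))) := funext hB1
    rw [this]; continuity
  have hfc : Continuous f := by continuity
  have hI : ∀ t : ℝ, HasDerivAt (fun u => ∫ s in u..T, f s) (-(f t)) t := fun t =>
    intervalIntegral.integral_hasDerivAt_left (hfc.intervalIntegrable _ _)
      (hfc.stronglyMeasurableAtFilter _ _) hfc.continuousAt
  have hA2d : ∀ t : ℝ, HasDerivAt A2 (f t * Real.exp (∫ s in t..T, f s)) t := by
    intro t
    have : A2 = fun u => -Real.exp (∫ s in u..T, f s) := funext hA2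
    rw [this]
    have := ((hI t).exp).neg
    refine this.congr_deriv ?_
    ring
  refine ⟨?_, ?_, ?_, ?_, ?_⟩
  · intro t; simp only [hG]; exact contDiff_const
  · intro r
    have : (fun s => G r s) = A2 := funext fun s => hG r s
    rw [this]
    exact fun t => (hA2d t).differentiableAt
  · intro r; rw [hG, hA2, intervalIntegral.integral_same, Real.exp_zero]
  · intro r t _; rw [hG, hA2]; simp [Real.exp_pos]
  · intro r t _
    have h1 : (fun s => G r s) = A2 := funext fun s => hG r s
    have h2 : deriv (fun s => G r s) t = f t * Real.exp (∫ s in t..T, f s) := by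
      rw [h1]; exact (hA2d t).deriv
    have h3 : (fun q : ℝ => G q t) = fun _ => A2 t := funext fun q => hG q t
    have h4 : deriv (fun p => deriv (fun q => G q t) p) r = 0 := by
      rw [h3]; simp
    have h5 : deriv (fun p => G p t) r = 0 := by rw [h3]; simp
    rw [h2, h4, h5, hG, hA2]
    ring
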